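/- Fix n ≥ 2, N ≥ 1, and 1 ≤ θ ≤ n. A measurement matrix M is an element of ({0,1}^N)^n, viewed as an n × N Boolean matrix whose rows are the nodes' blocks; its j-th column is M^{(j)} ∈ {0,1}^n. Let E be the set of measurement matrices all of whose columns have Hamming weight θ−1 or θ. Then E is a multidimensional fooling set for the block threshold function Π_θ^N: for any two distinct matrices M₁, M₂ ∈ E with Π_θ^N(M₁) = Π_θ^N(M₂), there exists a row index i* such that replacing row i* of one matrix by row i* of the other yields a matrix M* with Π_θ^N(M*) ≠ Π_θ^N(M₁). -/

import Mathlib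

/-- The Hamming weight of the `j`-th column of an `n × N` Boolean measurement matrix. -/
def colWeight {n N : ℕ} (M : Fin n → Fin N → Bool) (j : Fin N) : ℕ :=
  (Finset.univ.filter fun i => M i j = true).card

/-- The block threshold function `Π_θ^N`: its `j`-th coordinate is `1` iff the `j`-th
column of `M` has at least `θ` ones. -/
def blockThreshold {n N : ℕ} (θ : ℕ) (M : Fin n → Fin N → Bool) : Fin N → Bool :=
  fun j => decide (θ ≤ colWeight M j)

lemma colWeight_update {n N : ℕ} (M : Fin n → Fin N → Bool) (i : Fin n)
    (r : Fin N → Bool) (j : Fin N) :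
    colWeight (Function.update M i r) j + (if M i j = true then 1 else 0)
      = colWeight M j + (if r j = true then 1 else 0) := by
  classical
  simp only [colWeight, Finset.card_filter]
  rw [Fintype.sum_eq_add_sum_compl i, Fintype.sum_eq_add_sum_compl i]
  have hc : ∀ i' ∈ ({i}ᶜ : Finset (Fin n)),
      (if Function.update M i r i' j = true then 1 else 0)
        = (if M i' j = true then 1 else 0) := by
    intro i' hi'
    rw [Function.update_of_ne (by simpa using hi')]
  rw [Finset.sum_congr rfl hc, Function.update_self]
  ring

/-- The set of measurement matrices all of whose columns have Hamming weight
`θ−1` or `θ` is a multidimensional fooling set for the block threshold function `Π_θ^N`: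
for distinct such matrices with equal block function values, replacing some row of one
matrix by the corresponding row of the other changes the block function value. -/
theorem threshold_fooling_set (n N θ : ℕ)
    (hn : 2 ≤ n) (hN : 1 ≤ N) (hθ1 : 1 ≤ θ) (hθn : θ ≤ n)
    (M₁ M₂ : Fin n → Fin N → Bool)
    (h₁ : ∀ j, colWeight M₁ j = θ - 1 ∨ colWeight M₁ j = θ)
    (h₂ : ∀ j, colWeight M₂ j = θ - 1 ∨ colWeight M₂ j = θ)
    (hne : M₁ ≠ M₂)
    (heq : blockThreshold θ M₁ = blockThreshold θ M₂) :
    ∃ i : Fin n,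
      blockThreshold θ (Function.update M₁ i (M₂ i)) ≠ blockThreshold θ M₁ ∨
      blockThreshold θ (Function.update M₂ i (M₁ i)) ≠ blockThreshold θ M₁ := by
  obtain ⟨i, hi⟩ := Function.ne_iff.mp hne
  obtain ⟨j, hj⟩ := Function.ne_iff.mp hi
  have hheq : θ ≤ colWeight M₁ j ↔ θ ≤ colWeight M₂ j := by
    have := congrFun heq j
    simpa [blockThreshold, decide_eq_decide] using this
  have hw : colWeight M₁ j = colWeight M₂ j := by
    rcases h₁ j with a | a <;> rcases h₂ j with b | b <;> omega
  refine ⟨i, ?_⟩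
  cases hb1 : M₁ i j with
  | false =>
    have hb2 : M₂ i j = true := by revert hj; cases M₂ i j <;> simp [hb1]
    rcases h₁ j with hw1 | hw1
    · -- both columns have weight θ-1; bump M₁'s column to θ
      left
      have hk := colWeight_update M₁ i (M₂ i) j
      rw [hb1, hb2] at hk
      simp at hk
      intro hcon
      have := congrFun hcon j
      simp only [blockThreshold, decide_eq_decide] at this
      omega
    · -- both columns have weight θ; drop M₂'s column to θ-1
      right
      have hk := colWeight_update M₂ i (M₁ i) j
      rw [hb1, hb2] at hk
      simp at hk
      intro hcon
      have := congrFun hcon j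
      simp only [blockThreshold, decide_eq_decide] at this
      omega
  | true =>
    have hb2 : M₂ i j = false := by revert hj; cases M₂ i j <;> simp [hb1]
    rcases h₁ j with hw1 | hw1
    · -- both weight θ-1; bump M₂'s column to θ
      right
      have hk := colWeight_update M₂ i (M₁ i) j
      rw [hb1, hb2] at hk
      simp at hk
      intro hcon
      have := congrFun hcon j
      simp only [blockThreshold, decide_eq_decide] at this
      omega
    · -- both weight θ; drop M₁'s column to θ-1
      left
      have hk := colWeight_update M₁ i (M₂ i) j
      rw [hb1, hb2] at hk
      simp at hk
      intro hcon
      have := congrFun hcon j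
      simp only [blockThreshold, decide_eq_decide] at this
      omega
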